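/- Let Λ be a finite-dimensional real vector space with a symmetric bilinear form (·,·), Z : Λ → ℂ ℝ-linear with kernel K on which the form is negative definite, p : Λ → K the orthogonal projection, and suppose (v,v) = |Z(v)|² − ‖p(v)‖² for all v, where ‖k‖² = −(k,k) for k ∈ K. Let Δ ⊂ Λ be a set of lattice points (contained in a full-rank lattice) with (δ,δ) = −2 and Z(δ) ≠ 0 for all δ ∈ Δ. Then inf{|Z(δ)| : δ ∈ Δ} > 0. -/

import Mathlib

set_option maxHeartbeats 1000000


/-- Let `Λ` be a finite-dimensional real vector space with a symmetric
bilinear form `(·,·)`, `Z : Λ → ℂ` an `ℝ`-linear map with kernel `K` on which the form is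
negative definite, `p : Λ → K` the orthogonal projection (so `Z ∘ p = 0` and `p` is the
identity on `K`), and suppose `(v,v) = |Z(v)|² − ‖p(v)‖²` for all `v`, where
`‖k‖² = −(k,k)` on `K` (i.e. `(v,v) = |Z(v)|² + (p v, p v)`).  Let `Δ ⊆ Λ` consist of points
of a full lattice (the `ℤ`-span of an `ℝ`-basis) with `(δ,δ) = −2` and `Z(δ) ≠ 0` for all
`δ ∈ Δ`.  Then `inf{|Z(δ)| : δ ∈ Δ} > 0`. -/
theorem stmt8 {Λ : Type*} [AddCommGroup Λ] [Module ℝ Λ] [FiniteDimensional ℝ Λ]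
    (B : LinearMap.BilinForm ℝ Λ) (hsymm : ∀ x y, B x y = B y x)
    (Z : Λ →ₗ[ℝ] ℂ)
    (hneg : ∀ v ∈ LinearMap.ker Z, v ≠ 0 → B v v < 0)
    (p : Λ →ₗ[ℝ] Λ)
    (hpK : ∀ v : Λ, Z (p v) = 0)
    (hpid : ∀ v ∈ LinearMap.ker Z, p v = v)
    (hnorm : ∀ v : Λ, B v v = ‖Z v‖ ^ 2 + B (p v) (p v))
    {ι : Type*} [Fintype ι] (b : Module.Basis ι ℝ Λ)
    (Δ : Set Λ)
    (hΔ : ∀ δ ∈ Δ, δ ∈ Submodule.span ℤ (Set.range b) ∧ B δ δ = -2 ∧ Z δ ≠ 0) :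
    ∃ C : ℝ, 0 < C ∧ ∀ δ ∈ Δ, C ≤ ‖Z δ‖ := by
  classical
  -- The positive definite quadratic form `Q v = 2|Z v|² - B v v = |Z v|² + ‖p v‖²`.
  set Q : Λ → ℝ := fun v => 2 * ‖Z v‖ ^ 2 - B v v with hQdef
  have hQalt : ∀ v, Q v = ‖Z v‖ ^ 2 - B (p v) (p v) := by
    intro v; rw [hQdef]; simp only [hnorm v]; ring
  have hBp_nonpos : ∀ v : Λ, B (p v) (p v) ≤ 0 := by
    intro v
    rcases eq_or_ne (p v) 0 with h | h
    · simp [h]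
    · exact le_of_lt (hneg (p v) (by simpa [LinearMap.mem_ker] using hpK v) h)
  have hQnonneg : ∀ v, 0 ≤ Q v := by
    intro v
    rw [hQalt]
    linarith [sq_nonneg (‖Z v‖), hBp_nonpos v]
  have hQzero : ∀ v, Q v = 0 → v = 0 := by
    intro v hv
    have h1 : ‖Z v‖ ^ 2 - B (p v) (p v) = 0 := by rw [← hQalt]; exact hv
    have hZ : Z v = 0 := by
      have h2 : ‖Z v‖ ^ 2 = 0 := by
        nlinarith [hBp_nonpos v, sq_nonneg (‖Z v‖)]
      simpa using pow_eq_zero_iff (n := 2) (by norm_num) |>.mp h2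
    have hpv : p v = v := hpid v (LinearMap.mem_ker.mpr hZ)
    by_contra hv0
    have hlt := hneg v (LinearMap.mem_ker.mpr hZ) hv0
    rw [hpv] at h1
    simp [hZ] at h1
    linarith
  have hQsmul : ∀ (t : ℝ) (v : Λ), Q (t • v) = t ^ 2 * Q v := by
    intro t v
    rw [hQdef]
    simp only [map_smul, LinearMap.smul_apply, smul_eq_mul]
    have habs : ‖t • Z v‖ = |t| * ‖Z v‖ := by
      rw [norm_smul, Real.norm_eq_abs]
    rw [habs, mul_pow, sq_abs]
    ring
  -- Transfer to coordinates `V = ι → ℝ`.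
  set e := b.equivFun with he
  -- the quadratic form in coordinates
  set Z' : (ι → ℝ) →ₗ[ℝ] ℂ := Z.comp e.symm.toLinearMap with hZ'
  set B' : (ι → ℝ) →ₗ[ℝ] (ι → ℝ) →ₗ[ℝ] ℝ :=
    B.compl₁₂ e.symm.toLinearMap e.symm.toLinearMap with hB'
  set g : (ι → ℝ) →ₗ[ℝ] ((ι → ℝ) →L[ℝ] ℝ) :=
    (LinearMap.toContinuousLinearMap : ((ι → ℝ) →ₗ[ℝ] ℝ) ≃ₗ[ℝ] ((ι → ℝ) →L[ℝ] ℝ)).toLinearMap.comp B' with hg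
  set f : (ι → ℝ) → ℝ := fun x => 2 * ‖Z' x‖ ^ 2 - g x x with hf
  have hfe : ∀ x, f x = Q (e.symm x) := by
    intro x
    simp [hf, hg, hB', hZ', hQdef, LinearMap.compl₁₂_apply]
  have hfcont : Continuous f := by
    have h1 : Continuous fun x : ι → ℝ => Z' x := Z'.continuous_of_finiteDimensional
    have h2 : Continuous fun x : ι → ℝ => g x := g.continuous_of_finiteDimensional
    have h3 : Continuous fun x : ι → ℝ => g x x :=
      isBoundedBilinearMap_apply.continuous.comp (h2.prodMk continuous_id)
    exact ((continuous_const.mul ((continuous_norm.comp h1).pow 2)).sub h3)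
  -- Dispose of the trivial case.
  rcases isEmpty_or_nonempty ι with hι | hι
  · refine ⟨1, one_pos, fun δ hδ => ?_⟩
    exfalso
    have hδ0 : δ = 0 := by
      have : Subsingleton Λ := (b.repr.toEquiv.subsingleton_congr).mpr (by infer_instance)
      exact Subsingleton.elim δ 0
    have := (hΔ δ hδ).2.1
    rw [hδ0] at this
    simp at this
  -- Minimum of `f` on the unit sphere.
  have hsph : (Metric.sphere (0 : ι → ℝ) 1).Nonempty :=
    NormedSpace.sphere_nonempty.mpr zero_le_one
  obtain ⟨x₀, hx₀s, hx₀min⟩ :=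
    (isCompact_sphere (0 : ι → ℝ) 1).exists_isMinOn hsph hfcont.continuousOn
  set c := f x₀ with hc
  have hcpos : 0 < c := by
    have hx₀ne : e.symm x₀ ≠ 0 := by
      intro h
      have : x₀ = 0 := by
        have := congrArg e h
        simpa using this
      rw [this] at hx₀s
      simp at hx₀s
    have h0 : 0 ≤ c := by rw [hc, hfe]; exact hQnonneg _
    rcases h0.lt_or_eq with h | h
    · exact h
    · exfalso; exact hx₀ne (hQzero _ (by rw [← hfe]; exact h.symm))
  -- `f x ≤ 4` forces `‖x‖` bounded.
  set R := Real.sqrt (4 / c) with hR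
  have hball : ∀ x : ι → ℝ, f x ≤ 4 → ‖x‖ ≤ R := by
    intro x hx
    rcases eq_or_ne x 0 with h | h
    · rw [h]; simp [hR]; positivity
    · have hxn : ‖x‖ ≠ 0 := norm_ne_zero_iff.mpr h
      set u := ‖x‖⁻¹ • x with hu
      have hus : u ∈ Metric.sphere (0 : ι → ℝ) 1 := by
        simp [hu, norm_smul, abs_of_nonneg (inv_nonneg.mpr (norm_nonneg x)),
          inv_mul_cancel₀ hxn]
      have hxu : x = ‖x‖ • u := by
        rw [hu, smul_smul, mul_inv_cancel₀ hxn, one_smul]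
      have hfx : f x = ‖x‖ ^ 2 * f u := by
        conv_lhs => rw [hxu]
        rw [hfe, hfe, map_smul, hQsmul]
      have hcu : c ≤ f u := hx₀min hus
      have hsq : ‖x‖ ^ 2 ≤ 4 / c := by
        rw [le_div_iff₀ hcpos]
        calc ‖x‖ ^ 2 * c ≤ ‖x‖ ^ 2 * f u := by
              exact mul_le_mul_of_nonneg_left hcu (sq_nonneg _)
          _ = f x := hfx.symm
          _ ≤ 4 := hx
      rw [hR]
      exact Real.le_sqrt_of_sq_le hsq
  -- The lattice points with `f ≤ 4` form a finite set.
  set L : Submodule ℤ (ι → ℝ) := Submodule.span ℤ (Set.range (Pi.basisFun ℝ ι)) with hL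
  have hLd : DiscreteTopology L := ZSpan.discreteTopology_pi_basisFun
  have hLclosed : IsClosed (L : Set (ι → ℝ)) := by
    have : DiscreteTopology L.toAddSubgroup := hLd
    exact AddSubgroup.isClosed_of_discrete (H := L.toAddSubgroup)
  have hfin : Set.Finite ((L : Set (ι → ℝ)) ∩ Metric.closedBall 0 R) := by
    have hcompact : IsCompact ((L : Set (ι → ℝ)) ∩ Metric.closedBall 0 R) :=
      (isCompact_closedBall (0 : ι → ℝ) R).inter_left hLclosed
    have hdisc : DiscreteTopology ((L : Set (ι → ℝ)) ∩ Metric.closedBall 0 R :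
        Set (ι → ℝ)) :=
      DiscreteTopology.of_subset hLd Set.inter_subset_left
    exact hcompact.finite (isDiscrete_iff_discreteTopology.mpr hdisc)
  -- Lattice points of `Λ` map into `L`.
  have hmaps : ∀ v : Λ, v ∈ Submodule.span ℤ (Set.range b) → e v ∈ L := by
    intro v hv
    rw [Module.Basis.mem_span_iff_repr_mem]
    intro i
    have := (b.mem_span_iff_repr_mem ℤ v).mp hv i
    simpa [he, Pi.basisFun_repr, Module.Basis.equivFun_apply] using this
  -- The set of `δ ∈ Δ` with `|Z δ| ≤ 1` is finite.
  set Δ' : Set Λ := {δ ∈ Δ | ‖Z δ‖ ≤ 1} with hΔ'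
  have hΔ'fin : Δ'.Finite := by
    have himg : (⇑e '' Δ') ⊆ (L : Set (ι → ℝ)) ∩ Metric.closedBall 0 R := by
      rintro _ ⟨δ, hδ, rfl⟩
      obtain ⟨hδL, hδB, hδZ⟩ := hΔ δ hδ.1
      constructor
      · exact hmaps δ hδL
      · rw [Metric.mem_closedBall, dist_zero_right]
        apply hball
        rw [hfe, LinearEquiv.symm_apply_apply]
        have h1 : ‖Z δ‖ ^ 2 ≤ 1 :=
          pow_le_one₀ (norm_nonneg (Z δ)) hδ.2
        show 2 * ‖Z δ‖ ^ 2 - B δ δ ≤ 4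
        rw [hδB]
        linarith
    have : (⇑e '' Δ').Finite := hfin.subset himg
    exact Set.Finite.of_finite_image this (e.injective.injOn)
  -- Conclude.
  rcases Set.eq_empty_or_nonempty Δ' with hΔ'e | hΔ'ne
  · refine ⟨1, one_pos, fun δ hδ => ?_⟩
    by_contra h
    push_neg at h
    have : δ ∈ Δ' := ⟨hδ, le_of_lt h⟩
    rw [hΔ'e] at this
    exact this
  · obtain ⟨δ₀, hδ₀, hδ₀min⟩ :=
      Set.exists_min_image Δ' (fun δ => ‖Z δ‖) hΔ'fin hΔ'ne
    refine ⟨‖Z δ₀‖, ?_, fun δ hδ => ?_⟩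
    · have := (hΔ δ₀ hδ₀.1).2.2
      exact norm_pos_iff.mpr this
    · by_cases h : ‖Z δ‖ ≤ 1
      · exact hδ₀min δ ⟨hδ, h⟩
      · push_neg at h
        exact le_trans hδ₀.2 (le_of_lt h)
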